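/- With ℋ_k defined by the recursion ℋ_0 = 0 and ℋ_k(m) = ζ(m) + ½(ℋ_{k-1}(m₊) + ℋ_{k-1}(m₋)), where ζ(m) = ½⟨Xξ(m),ξ(m)⟩, there exists a constant C > 0 depending only on n (e.g., via the bound |ξ(m)| ≤ 2√n) such that |ℋ_k(m₊) − ℋ_k(m₋)| ≤ C d ‖X‖ for all m ∈ ℬ^d and all k ≥ 0. -/

import Mathlib

/-- The shift m|b on histories: drop the first symbol, append b. -/
def shift {d : ℕ} (m : Fin d → Bool) (b : Bool) : Fin d → Bool :=
  fun i => if h : (i : ℕ) + 1 < d then m ⟨(i : ℕ) + 1, h⟩ else b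

/-- m|s : append the symbols of s one at a time to the history m. -/
def appendWord {d : ℕ} : {ℓ : ℕ} → (Fin d → Bool) → (Fin ℓ → Bool) → (Fin d → Bool)
  | 0, m, _ => m
  | _+1, m, s => appendWord (shift m (s 0)) (fun i => s i.succ)

/-- The quadratic form ⟨Xv, v⟩. -/
noncomputable def quadip {n : ℕ} (X : Matrix (Fin n) (Fin n) ℝ) (v : Fin n → ℝ) : ℝ :=
  ∑ i, X.mulVec v i * v i

/-- ℋ_k(m), defined by ℋ_0 = 0 and
ℋ_k(m) = ½⟨Xξ(m),ξ(m)⟩ + ½(ℋ_{k-1}(m₊) + ℋ_{k-1}(m₋)). -/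
noncomputable def H {n d : ℕ} (X : Matrix (Fin n) (Fin n) ℝ)
    (ξ : (Fin d → Bool) → Fin n → ℝ) : ℕ → (Fin d → Bool) → ℝ
  | 0, _ => 0
  | k+1, m => (1/2) * quadip X (ξ m)
      + (1/2) * (H X ξ k (shift m true) + H X ξ k (shift m false))

/-- The Euclidean operator norm of a matrix. -/
noncomputable def opNorm {n : ℕ} (X : Matrix (Fin n) (Fin n) ℝ) : ℝ :=
  ‖(Matrix.toEuclideanCLM (𝕜 := ℝ) X : EuclideanSpace ℝ (Fin n) →L[ℝ] EuclideanSpace ℝ (Fin n))‖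

lemma quad_bound {n : ℕ} (X : Matrix (Fin n) (Fin n) ℝ) (v : Fin n → ℝ)
    (hv : ∀ i, |v i| ≤ 2) : |quadip X v| ≤ 4 * n * opNorm X := by
  set w : EuclideanSpace ℝ (Fin n) := (WithLp.equiv 2 _).symm v
  set A := (Matrix.toEuclideanCLM (𝕜 := ℝ) X)
  have hq : quadip X v = inner ℝ (A w) w := by
    rw [PiLp.inner_apply]
    have : A w = (WithLp.equiv 2 _).symm (X.mulVec v) := by
      rfl
    rw [this]
    simp only [WithLp.equiv_symm_apply, RCLike.inner_apply, conj_trivial]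
    exact Finset.sum_congr rfl (fun i _ => mul_comm _ _)
  have hw : ‖w‖ ≤ 2 * Real.sqrt n := by
    rw [EuclideanSpace.norm_eq]
    have : ∑ i, ‖w i‖^2 ≤ ∑ _i : Fin n, (4:ℝ) := by
      apply Finset.sum_le_sum
      intro i _
      have : ‖w i‖ ≤ 2 := by simpa [w, Real.norm_eq_abs] using hv i
      nlinarith [norm_nonneg (w i)]
    calc Real.sqrt (∑ i, ‖w i‖^2) ≤ Real.sqrt (∑ _i : Fin n, (4:ℝ)) := Real.sqrt_le_sqrt this
      _ = 2 * Real.sqrt n := by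
          rw [Finset.sum_const]
          rw [show ∀ x:ℝ, Finset.univ.card • x = (n:ℝ)*x by intro x; simp [mul_comm],
            show (n:ℝ) * 4 = 2^2 * n by ring, Real.sqrt_mul (by positivity)]
          rw [Real.sqrt_sq (by norm_num)]
  have h1 : |quadip X v| ≤ ‖A w‖ * ‖w‖ := by
    rw [hq]; exact abs_real_inner_le_norm _ _
  have h2 : ‖A w‖ ≤ opNorm X * ‖w‖ := A.le_opNorm w
  have h3 : ‖A w‖ * ‖w‖ ≤ (opNorm X * ‖w‖) * ‖w‖ :=
    mul_le_mul_of_nonneg_right h2 (norm_nonneg _)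
  have hns : Real.sqrt n * Real.sqrt n = n := Real.mul_self_sqrt (by positivity)
  have h4 : (opNorm X * ‖w‖) * ‖w‖ ≤ 4 * n * opNorm X := by
    have hop : 0 ≤ opNorm X := norm_nonneg _
    nlinarith [norm_nonneg w, Real.sqrt_nonneg (n:ℝ),
      mul_le_mul_of_nonneg_left (mul_le_mul hw hw (norm_nonneg w) (by positivity)) hop]
  linarith

/-- Main induction: if two histories agree on all indices ≥ t, then the H values are
t·(4n‖X‖)-close. -/
lemma H_diff_bound {n d : ℕ} (X : Matrix (Fin n) (Fin n) ℝ)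
    (ξ : (Fin d → Bool) → Fin n → ℝ) (hξ : ∀ m i, |ξ m i| ≤ 2) :
    ∀ (k t : ℕ) (m m' : Fin d → Bool), (∀ i : Fin d, t ≤ (i:ℕ) → m i = m' i) →
      |H X ξ k m - H X ξ k m'| ≤ (4 * n * opNorm X) * t := by
  intro k
  induction k with
  | zero =>
    intro t m m' _
    simp [H]
    have hop : (0:ℝ) ≤ opNorm X := norm_nonneg _
    exact mul_nonneg (mul_nonneg (by positivity) hop) (Nat.cast_nonneg t)
  | succ k ih =>
    intro t m m' hmm
    match t with
    | 0 =>
      have : m = m' := funext fun i => hmm i (Nat.zero_le _)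
      subst this
      simp
    | t+1 =>
      have hsh : ∀ b : Bool, ∀ i : Fin d, t ≤ (i:ℕ) → shift m b i = shift m' b i := by
        intro b i hi
        unfold shift
        split
        · exact hmm _ (by simpa using Nat.succ_le_succ hi)
        · rfl
      have h1 := ih t (shift m true) (shift m' true) (hsh true)
      have h2 := ih t (shift m false) (shift m' false) (hsh false)
      have hq1 := quad_bound X (ξ m) (hξ m)
      have hq2 := quad_bound X (ξ m') (hξ m')
      have expand : H X ξ (k+1) m - H X ξ (k+1) m'
          = (1/2) * (quadip X (ξ m) - quadip X (ξ m'))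
            + (1/2) * ((H X ξ k (shift m true) - H X ξ k (shift m' true))
              + (H X ξ k (shift m false) - H X ξ k (shift m' false))) := by
        simp only [H]; ring
      rw [expand]
      have hcast : ((t:ℝ)+1) = ((t+1 : ℕ) : ℝ) := by push_cast; ring
      calc |(1/2) * (quadip X (ξ m) - quadip X (ξ m'))
            + (1/2) * ((H X ξ k (shift m true) - H X ξ k (shift m' true))
              + (H X ξ k (shift m false) - H X ξ k (shift m' false)))|
          ≤ (1/2) * |quadip X (ξ m) - quadip X (ξ m')|
            + (1/2) * (|H X ξ k (shift m true) - H X ξ k (shift m' true)|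
              + |H X ξ k (shift m false) - H X ξ k (shift m' false)|) := by
            have := abs_add_le ((1/2) * (quadip X (ξ m) - quadip X (ξ m')))
              ((1/2) * ((H X ξ k (shift m true) - H X ξ k (shift m' true))
                + (H X ξ k (shift m false) - H X ξ k (shift m' false))))
            have h3 := abs_add_le (H X ξ k (shift m true) - H X ξ k (shift m' true))
              (H X ξ k (shift m false) - H X ξ k (shift m' false))
            rw [abs_mul, abs_mul] at this
            simp only [abs_of_pos (show (0:ℝ) < 1/2 by norm_num)] at this
            linarith
        _ ≤ (4 * n * opNorm X) * (t+1) := by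
            have hqd : |quadip X (ξ m) - quadip X (ξ m')|
                ≤ |quadip X (ξ m)| + |quadip X (ξ m')| := abs_sub _ _
            linarith
        _ = (4 * n * opNorm X) * ((t+1 : ℕ) : ℝ) := by rw [hcast]

theorem stmt5 (n : ℕ) :
    ∃ C : ℝ, 0 < C ∧
      ∀ (d : ℕ) (q : (Fin d → Bool) → Fin n → ℝ),
        (∀ m i, q m i ∈ Set.Icc (-1:ℝ) 1) →
      ∀ p : Fin n → ℝ, (∀ i, 0 < p i) →
      ∀ X : Matrix (Fin n) (Fin n) ℝ, X.IsSymm →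
      ∀ (k : ℕ) (m : Fin d → Bool),
        |H X (fun m' i => q m' i - (∑ j, p j * q m' j) / (∑ j, p j)) k (shift m true)
          - H X (fun m' i => q m' i - (∑ j, p j * q m' j) / (∑ j, p j)) k (shift m false)|
            ≤ C * d * opNorm X := by
  refine ⟨4 * n + 1, by positivity, ?_⟩
  intro d q hq p hp X _ k m
  set ξ : (Fin d → Bool) → Fin n → ℝ :=
    fun m' i => q m' i - (∑ j, p j * q m' j) / (∑ j, p j) with hξdef
  have hξ : ∀ m' i, |ξ m' i| ≤ 2 := by
    intro m' i
    have hps : (0:ℝ) < ∑ j, p j := by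
      have : (0:ℝ) < p i := hp i
      have hle : p i ≤ ∑ j, p j :=
        Finset.single_le_sum (fun j _ => (hp j).le) (Finset.mem_univ i)
      linarith
    have habs : |∑ j, p j * q m' j| ≤ ∑ j, p j := by
      calc |∑ j, p j * q m' j| ≤ ∑ j, |p j * q m' j| := Finset.abs_sum_le_sum_abs _ _
        _ ≤ ∑ j, p j := by
            apply Finset.sum_le_sum
            intro j _
            rw [abs_mul, abs_of_pos (hp j)]
            have h1 := (hq m' j).1
            have h2 := (hq m' j).2
            have : |q m' j| ≤ 1 := abs_le.mpr ⟨h1, h2⟩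
            nlinarith [hp j]
    have havg : |(∑ j, p j * q m' j) / (∑ j, p j)| ≤ 1 := by
      rw [abs_div, abs_of_pos hps, div_le_one hps]
      exact habs
    have h1 := (hq m' i).1
    have h2 := (hq m' i).2
    have := abs_le.mp havg
    simp only [hξdef]
    rw [abs_le]
    constructor <;> linarith
  have key := H_diff_bound X ξ hξ k d (shift m true) (shift m false)
    (fun i hi => absurd i.2 (by omega))
  have hop : 0 ≤ opNorm X := norm_nonneg _
  calc |H X ξ k (shift m true) - H X ξ k (shift m false)|
      ≤ (4 * n * opNorm X) * d := key
    _ ≤ (4 * n + 1) * d * opNorm X := by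
        have : (0:ℝ) ≤ d := Nat.cast_nonneg d
        nlinarith
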